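/- Let T be a G-real-tree that splits as a graph of actions with skeleton S and vertex trees (Y_v). If the vertex trees indexed by a G-invariant subset V' of vertices are equivariantly collapsed to points, yielding a tree T' with induced map p : T → T', then p preserves alignment; consequently, if the G-action on T is minimal then the G-action on T' is minimal. -/

import Mathlib

open Pointwise

/-- `MBtw x y z`: `y` lies on the geodesic segment from `x` to `z` (metric betweenness). -/
def MBtw {T : Type*} [MetricSpace T] (x y z : T) : Prop :=
  dist x y + dist y z = dist x z

/-- The (metric) segment from `x` to `z`. -/
def seg {T : Type*} [MetricSpace T] (x z : T) : Set T := {y | MBtw x y z}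

/-- A subset is (metrically) convex if it contains the segment between any two of its points. -/
def MConvex {T : Type*} [MetricSpace T] (S : Set T) : Prop :=
  ∀ x ∈ S, ∀ z ∈ S, seg x z ⊆ S

/-- A real tree: a geodesic metric space which is 0-hyperbolic (four-point condition). -/
class RealTree (T : Type*) [MetricSpace T] : Prop where
  exists_btw : ∀ x z : T, ∀ r ∈ Set.Icc (0 : ℝ) (dist x z), ∃ y, MBtw x y z ∧ dist x y = r
  fourPoint : ∀ x y z w : T,
    dist x y + dist z w ≤ max (dist x z + dist y w) (dist x w + dist y z)

/-- An arc: a nondegenerate segment. -/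
def IsArc {T : Type*} [MetricSpace T] (I : Set T) : Prop :=
  ∃ a b : T, a ≠ b ∧ I = seg a b

/-- A minimal action: no proper nonempty invariant subtree. -/
def MinimalAction (G T : Type*) [Group G] [MetricSpace T] [MulAction G T] : Prop :=
  ∀ Y : Set T, Y.Nonempty → MConvex Y → (∀ g : G, g • Y = Y) → Y = Set.univ

/-- `Y` is an indecomposable subtree for the `G`-action: it is nondegenerate, and every arc
`J ⊆ Y` is covered by finitely many `G`-translates of any arc `I ⊆ Y`, with consecutive
translates overlapping in a nondegenerate intersection. -/
def Indecomposable (G : Type*) {T : Type*} [Group G] [MetricSpace T] [MulAction G T]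
    (Y : Set T) : Prop :=
  (∃ I, IsArc I ∧ I ⊆ Y) ∧
  ∀ I J : Set T, IsArc I → I ⊆ Y → IsArc J → J ⊆ Y →
    ∃ n : ℕ, ∃ g : Fin (n + 1) → G,
      J ⊆ ⋃ i, g i • I ∧
      ∀ i : Fin n, ∃ A, IsArc A ∧ A ⊆ (g i.castSucc • I) ∩ (g i.succ • I)

/-- A transverse covering of a G-real-tree: a G-invariant family of closed subtrees
covering T, distinct members meeting in at most one point, every arc finitely covered. -/
def TransverseCovering (G : Type*) {T : Type*} [Group G] [MetricSpace T] [MulAction G T]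
    (Ys : Set (Set T)) : Prop :=
  (∀ Y ∈ Ys, IsClosed Y ∧ MConvex Y) ∧
  (⋃₀ Ys = Set.univ) ∧
  (∀ g : G, ∀ Y ∈ Ys, g • Y ∈ Ys) ∧
  (∀ Y₁ ∈ Ys, ∀ Y₂ ∈ Ys, Y₁ ≠ Y₂ → (Y₁ ∩ Y₂).Subsingleton) ∧
  (∀ I : Set T, IsArc I → ∃ F : Set (Set T), F.Finite ∧ F ⊆ Ys ∧ I ⊆ ⋃₀ F)

section Basic
variable {T : Type*} [MetricSpace T]
lemma mbtw_self_left (x z : T) : MBtw x x z := by simp [MBtw]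
lemma mbtw_self_right (x z : T) : MBtw x z z := by simp [MBtw]
lemma mbtw_symm {x y z : T} (h : MBtw x y z) : MBtw z y x := by
  unfold MBtw at h ⊢
  rw [dist_comm z y, dist_comm y x, dist_comm z x]
  linarith
lemma mbtw_eq {x y : T} (h : MBtw x y x) : y = x := by
  unfold MBtw at h
  rw [dist_self, dist_comm y x] at h
  have h2 : dist x y = 0 := by linarith [dist_nonneg (x := x) (y := y)]
  exact (dist_eq_zero.mp h2).symm
lemma mbtw_concat {a b c d : T} (h1 : MBtw a b d) (h2 : MBtw b c d) :
    MBtw a b c ∧ MBtw a c d := by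
  have t1 := dist_triangle a b c
  have t2 := dist_triangle a c d
  unfold MBtw at h1 h2 ⊢
  constructor <;> linarith
variable [RealTree T]
lemma btw_unique {x z y y' : T} (h1 : MBtw x y z) (h2 : MBtw x y' z)
    (he : dist x y = dist x y') : y = y' := by
  have h4 := RealTree.fourPoint x z y y'
  unfold MBtw at h1 h2
  rw [dist_comm z y', dist_comm z y] at h4
  have e1 : dist x y + dist y' z = dist x z := by linarith
  have e2 : dist x y' + dist y z = dist x z := by linarith
  rw [e1, e2, max_self] at h4
  have : dist y y' ≤ 0 := by linarith
  exact dist_le_zero.mp this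
lemma btw_order {x z a b : T} (h1 : MBtw x a z) (h2 : MBtw x b z)
    (hle : dist x a ≤ dist x b) :
    dist a b = dist x b - dist x a ∧ MBtw x a b ∧ MBtw a b z := by
  have h4 := RealTree.fourPoint x z a b
  unfold MBtw at h1 h2 ⊢
  rw [dist_comm z a, dist_comm z b] at h4
  have hmax : max (dist x a + dist b z) (dist x b + dist a z) = dist x b + dist a z :=
    max_eq_right (by linarith)
  rw [hmax] at h4
  have t := dist_triangle x a b
  refine ⟨by linarith, by linarith, by linarith⟩
lemma seg_sub_seg_aux {x z w1 w2 : T} (h1 : w1 ∈ seg x z) (h2 : w2 ∈ seg x z)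
    (hle : dist x w1 ≤ dist x w2) : seg w1 w2 ⊆ seg x z := by
  intro y hy
  obtain ⟨hd, -, -⟩ := btw_order h1 h2 hle
  have hy' : MBtw w1 y w2 := hy
  have h1' : MBtw x w1 z := h1
  have h2' : MBtw x w2 z := h2
  have t1 := dist_triangle x y z
  have t2 := dist_triangle x w1 y
  have t3 := dist_triangle y w2 z
  show MBtw x y z
  unfold MBtw at hy' h1' h2' ⊢
  linarith
lemma seg_sub_seg {x z w1 w2 : T} (h1 : w1 ∈ seg x z) (h2 : w2 ∈ seg x z) :
    seg w1 w2 ⊆ seg x z := by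
  rcases le_total (dist x w1) (dist x w2) with hle | hle
  · exact seg_sub_seg_aux h1 h2 hle
  · intro y hy
    exact seg_sub_seg_aux h2 h1 hle (mbtw_symm hy)
lemma exists_median (A B C : T) : ∃ m, MBtw A m C ∧ MBtw A m B ∧ MBtw B m C := by
  have hs0 : 0 ≤ (dist A B + dist A C - dist B C) / 2 := by
    have h := dist_triangle B A C
    rw [dist_comm B A] at h
    linarith
  have hs1 : (dist A B + dist A C - dist B C) / 2 ≤ dist A C := by
    have h := dist_triangle A C B
    rw [dist_comm C B] at h
    linarith
  obtain ⟨m, hm, hdm⟩ := RealTree.exists_btw A C _ ⟨hs0, hs1⟩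
  have hm' : dist A m + dist m C = dist A C := hm
  have h4 := RealTree.fourPoint B m A C
  rw [dist_comm B A, dist_comm m A] at h4
  have e1 : dist A B + dist m C = dist B C + dist A m := by rw [hdm]; linarith
  rw [e1, max_self] at h4
  have t : dist A B ≤ dist A m + dist m B := dist_triangle A m B
  have hc : dist m B = dist B m := dist_comm m B
  have hBm : dist B m = dist A B - dist A m := by linarith
  refine ⟨m, hm, ?_, ?_⟩ <;> unfold MBtw <;> linarith
noncomputable def par {T : Type*} [MetricSpace T] [RealTree T] (x z : T) (r : ℝ) : T :=
  if h : r ∈ Set.Icc (0:ℝ) (dist x z) then (RealTree.exists_btw x z r h).choose else x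
lemma par_spec {x z : T} {r : ℝ} (h : r ∈ Set.Icc (0:ℝ) (dist x z)) :
    MBtw x (par x z r) z ∧ dist x (par x z r) = r := by
  unfold par
  rw [dif_pos h]
  exact (RealTree.exists_btw x z r h).choose_spec
lemma par_of_btw {x z y : T} (h : MBtw x y z) : par x z (dist x y) = y := by
  have h' : dist x y + dist y z = dist x z := h
  have hmem : dist x y ∈ Set.Icc (0:ℝ) (dist x z) :=
    ⟨dist_nonneg, by linarith [dist_nonneg (x := y) (y := z)]⟩
  obtain ⟨hb, hd⟩ := par_spec hmem
  exact btw_unique hb h hd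
lemma par_dist {x z : T} {r s : ℝ} (hr : r ∈ Set.Icc (0:ℝ) (dist x z))
    (hs : s ∈ Set.Icc (0:ℝ) (dist x z)) (hle : r ≤ s) :
    dist (par x z r) (par x z s) = s - r := by
  obtain ⟨hbr, hdr⟩ := par_spec hr
  obtain ⟨hbs, hds⟩ := par_spec hs
  have h := (btw_order hbr hbs (by rw [hdr, hds]; exact hle)).1
  rw [hdr, hds] at h
  exact h
lemma par_zero {x z : T} : par x z 0 = x := by
  have h := par_of_btw (mbtw_self_left x z)
  rwa [dist_self] at h
lemma par_last {x z : T} : par x z (dist x z) = z :=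
  par_of_btw (mbtw_self_right x z)
end Basic

theorem align_aux {G T T' : Type*} [Group G] [MetricSpace T] [MetricSpace T']
    [RealTree T] [RealTree T'] [MulAction G T]
    (Ys : Set (Set T)) (htc : TransverseCovering G Ys)
    (Ys' : Set (Set T)) (hsub : Ys' ⊆ Ys)
    (p : T → T')
    (hiso : ∀ Y ∈ Ys \ Ys', ∀ x ∈ Y, ∀ y ∈ Y, dist (p x) (p y) = dist x y)
    (hfib : ∀ x y : T, p x = p y ↔ (x = y ∨ seg x y ⊆ ⋃₀ Ys'))
    (x y z : T) (hy : MBtw x y z) : MBtw (p x) (p y) (p z) := by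
  classical
  rcases eq_or_ne x z with rfl | hxz
  · rw [mbtw_eq hy]
    exact mbtw_self_left _ _
  obtain ⟨F, hFfin, hFsub, hFcov⟩ := htc.2.2.2.2 (seg x z) ⟨x, z, hxz, rfl⟩
  set K : Set T → Set ℝ :=
    fun Y => {r | r ∈ Set.Icc (0:ℝ) (dist x z) ∧ par x z r ∈ Y} with hKdef
  have hKmem : ∀ {Y : Set T} {r : ℝ},
      r ∈ K Y ↔ r ∈ Set.Icc (0:ℝ) (dist x z) ∧ par x z r ∈ Y := Iff.rfl
  have hKsub : ∀ Y, K Y ⊆ Set.Icc (0:ℝ) (dist x z) := fun Y r hr => (hKmem.1 hr).1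
  have hd0 : (0:ℝ) ≤ dist x z := dist_nonneg
  -- continuity of the parametrization
  have hφdist : ∀ {r s : ℝ}, r ∈ Set.Icc (0:ℝ) (dist x z) →
      s ∈ Set.Icc (0:ℝ) (dist x z) → dist (par x z r) (par x z s) = dist r s := by
    intro r s hr hs
    rcases le_total r s with h | h
    · rw [par_dist hr hs h, Real.dist_eq, abs_of_nonpos (by linarith)]; ring
    · rw [dist_comm (par x z r) (par x z s), par_dist hs hr h, Real.dist_eq,
        abs_of_nonneg (by linarith)]
  have hφcont : ContinuousOn (par x z) (Set.Icc (0:ℝ) (dist x z)) := by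
    apply LipschitzOnWith.continuousOn (K := Real.toNNReal 1)
    apply LipschitzOnWith.of_dist_le'
    intro r hr s hs
    rw [hφdist hr hs, one_mul]
  have hKclosed : ∀ Y ∈ F, IsClosed (K Y) := by
    intro Y hYF
    have hYc : IsClosed Y := (htc.1 Y (hFsub hYF)).1
    have heq : K Y = Set.Icc (0:ℝ) (dist x z) ∩ (par x z) ⁻¹' Y := by
      ext r
      simp [hKdef, Set.mem_inter_iff]
    rw [heq]
    exact hφcont.preimage_isClosed_of_isClosed isClosed_Icc hYc
  have hKconv : ∀ Y ∈ F, ∀ r1 ∈ K Y, ∀ r2 ∈ K Y, ∀ r, r1 ≤ r → r ≤ r2 → r ∈ K Y := by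
    intro Y hYF r1 h1 r2 h2 r hr1 hr2
    obtain ⟨h1i, h1m⟩ := hKmem.1 h1
    obtain ⟨h2i, h2m⟩ := hKmem.1 h2
    have hrIcc : r ∈ Set.Icc (0:ℝ) (dist x z) := ⟨le_trans h1i.1 hr1, le_trans hr2 h2i.2⟩
    refine hKmem.2 ⟨hrIcc, ?_⟩
    have hb : par x z r ∈ seg (par x z r1) (par x z r2) := by
      show MBtw (par x z r1) (par x z r) (par x z r2)
      unfold MBtw
      rw [par_dist h1i hrIcc hr1, par_dist hrIcc h2i hr2, par_dist h1i h2i (le_trans hr1 hr2)]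
      ring
    exact (htc.1 Y (hFsub hYF)).2 (par x z r1) h1m (par x z r2) h2m hb
  have hKcov : ∀ r ∈ Set.Icc (0:ℝ) (dist x z), ∃ Y ∈ F, r ∈ K Y := by
    intro r hr
    obtain ⟨Y, hYF, hφY⟩ := hFcov ((par_spec hr).1)
    exact ⟨Y, hYF, hKmem.2 ⟨hr, hφY⟩⟩
  -- the finite set of endpoints
  have hy' : dist x y + dist y z = dist x z := hy
  have hyIcc : dist x y ∈ Set.Icc (0:ℝ) (dist x z) :=
    ⟨dist_nonneg, by linarith [dist_nonneg (x := y) (y := z)]⟩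
  set E : Finset ℝ :=
    ({0, dist x z, dist x y} ∪ hFfin.toFinset.image (fun Y => sInf (K Y))) ∪
      hFfin.toFinset.image (fun Y => sSup (K Y)) with hEdef
  have h0E : (0:ℝ) ∈ E := by simp [hEdef]
  have hdE : dist x z ∈ E := by simp [hEdef]
  have hyE : dist x y ∈ E := by simp [hEdef]
  have hEIcc : ∀ e ∈ E, e ∈ Set.Icc (0:ℝ) (dist x z) := by
    intro e he
    simp only [hEdef, Finset.mem_union, Finset.mem_insert, Finset.mem_singleton,
      Finset.mem_image, Set.Finite.mem_toFinset] at he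
    rcases he with ((rfl | rfl | rfl) | ⟨Y, hYF, rfl⟩) | ⟨Y, hYF, rfl⟩
    · exact Set.left_mem_Icc.2 hd0
    · exact Set.right_mem_Icc.2 hd0
    · exact hyIcc
    · rcases Set.eq_empty_or_nonempty (K Y) with hKe | hKne
      · rw [hKe, Real.sInf_empty]
        exact Set.left_mem_Icc.2 hd0
      · exact hKsub Y ((hKclosed Y hYF).csInf_mem hKne ⟨0, fun t ht => (hKsub Y ht).1⟩)
    · rcases Set.eq_empty_or_nonempty (K Y) with hKe | hKne
      · rw [hKe, Real.sSup_empty]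
        exact Set.left_mem_Icc.2 hd0
      · exact hKsub Y ((hKclosed Y hYF).csSup_mem hKne ⟨dist x z, fun t ht => (hKsub Y ht).2⟩)
  set L : List ℝ := E.sort (· ≤ ·) with hLdef
  have hLlen : 0 < L.length := by
    rw [hLdef, Finset.length_sort]
    exact Finset.card_pos.2 ⟨0, h0E⟩
  have hmemL : ∀ {e : ℝ}, e ∈ E ↔ e ∈ L := by
    intro e
    rw [hLdef, Finset.mem_sort]
  have hsorted : L.Pairwise (· ≤ ·) := Finset.pairwise_sort _ _
  set t : ℕ → ℝ := fun i => L.getD i (dist x z) with htdef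
  have htE : ∀ {i : ℕ}, i < L.length → t i ∈ E := by
    intro i hi
    have h : t i = L.get ⟨i, hi⟩ := List.getD_eq_get L _ ⟨i, hi⟩
    rw [h]
    exact hmemL.2 (List.get_mem L ⟨i, hi⟩)
  have htlast : ∀ {i : ℕ}, L.length ≤ i → t i = dist x z := by
    intro i hi
    exact List.getD_eq_default L _ hi
  have htIcc : ∀ i, t i ∈ Set.Icc (0:ℝ) (dist x z) := by
    intro i
    by_cases hi : i < L.length
    · exact hEIcc _ (htE hi)
    · rw [htlast (le_of_not_gt hi)]
      exact Set.right_mem_Icc.2 hd0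
  have htmono : ∀ {i j : ℕ}, i ≤ j → t i ≤ t j := by
    intro i j hij
    by_cases hj : j < L.length
    · have hi : i < L.length := lt_of_le_of_lt hij hj
      rw [show t i = L.get ⟨i, hi⟩ from List.getD_eq_get L _ ⟨i, hi⟩,
        show t j = L.get ⟨j, hj⟩ from List.getD_eq_get L _ ⟨j, hj⟩]
      exact hsorted.rel_get_of_le (by exact hij)
    · rw [htlast (le_of_not_gt hj)]
      exact (htIcc i).2
  have ht0 : t 0 = 0 := by
    have h0 : t 0 ∈ E := htE hLlen
    obtain ⟨k, hgk⟩ := List.mem_iff_get.1 (hmemL.1 h0E)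
    have h0le : t 0 ≤ 0 := by
      calc t 0 = L.get ⟨0, hLlen⟩ := List.getD_eq_get L _ ⟨0, hLlen⟩
        _ ≤ L.get k := hsorted.rel_get_of_le (by exact Nat.zero_le _)
        _ = 0 := hgk
    exact le_antisymm h0le (hEIcc _ h0).1
  have htmax : ∀ e ∈ E, ∀ {i : ℕ}, L.length ≤ i + 1 → e ≤ t i := by
    intro e he i hi
    obtain ⟨k, hgk⟩ := List.mem_iff_get.1 (hmemL.1 he)
    by_cases hii : i < L.length
    · calc e = L.get k := hgk.symm
        _ ≤ L.get ⟨i, hii⟩ :=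
          hsorted.rel_get_of_le (by exact Nat.lt_succ_iff.1 (lt_of_lt_of_le k.2 hi))
        _ = t i := (List.getD_eq_get L _ ⟨i, hii⟩).symm
    · rw [htlast (le_of_not_gt hii)]
      exact (hEIcc e he).2
  have hgap : ∀ (i : ℕ), ∀ e ∈ E, ¬(t i < e ∧ e < t (i + 1)) := by
    rintro i e he ⟨hlt1, hlt2⟩
    by_cases h1 : i + 1 < L.length
    · have hi : i < L.length := Nat.lt_of_succ_lt h1
      obtain ⟨k, hgk⟩ := List.mem_iff_get.1 (hmemL.1 he)
      rcases le_or_gt k.1 i with hk | hk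
      · have h : e ≤ t i := by
          rw [show t i = L.get ⟨i, hi⟩ from List.getD_eq_get L _ ⟨i, hi⟩, ← hgk]
          exact hsorted.rel_get_of_le (by exact hk)
        linarith
      · have h : t (i + 1) ≤ e := by
          rw [show t (i+1) = L.get ⟨i+1, h1⟩ from List.getD_eq_get L _ ⟨i+1, h1⟩, ← hgk]
          exact hsorted.rel_get_of_le (by exact hk)
        linarith
    · have h : e ≤ t i := htmax e he (le_of_not_gt h1)
      linarith
  have hpiece : ∀ i : ℕ, ∃ Y ∈ F, ∀ r, t i ≤ r → r ≤ t (i + 1) → r ∈ K Y := by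
    intro i
    have hmid : (t i + t (i + 1)) / 2 ∈ Set.Icc (0:ℝ) (dist x z) := by
      constructor
      · have := (htIcc i).1
        have := (htIcc (i + 1)).1
        linarith
      · have := (htIcc i).2
        have := (htIcc (i + 1)).2
        linarith
    obtain ⟨Y, hYF, hmK⟩ := hKcov _ hmid
    refine ⟨Y, hYF, ?_⟩
    rcases eq_or_lt_of_le (htmono (Nat.le_succ i)) with heq | hlt
    · intro r h1 h2
      have hr : r = t i := le_antisymm (heq ▸ h2) h1
      have hmid' : (t i + t (i + 1)) / 2 = t i := by rw [← heq]; ring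
      rw [hr, ← hmid']
      exact hmK
    · have hne : (K Y).Nonempty := ⟨_, hmK⟩
      have hbb : BddBelow (K Y) := ⟨0, fun s hs => (hKsub Y hs).1⟩
      have hba : BddAbove (K Y) := ⟨dist x z, fun s hs => (hKsub Y hs).2⟩
      have hinf : sInf (K Y) ∈ K Y := (hKclosed Y hYF).csInf_mem hne hbb
      have hsup : sSup (K Y) ∈ K Y := (hKclosed Y hYF).csSup_mem hne hba
      have hinfle : sInf (K Y) ≤ t i := by
        have hle1 : sInf (K Y) ≤ (t i + t (i + 1)) / 2 := csInf_le hbb hmK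
        have hmemE : sInf (K Y) ∈ E := by
          simp only [hEdef, Finset.mem_union]
          left; right
          exact Finset.mem_image.2 ⟨Y, (Set.Finite.mem_toFinset _).2 hYF, rfl⟩
        by_contra hcon
        push_neg at hcon
        exact hgap i _ hmemE ⟨hcon, by linarith⟩
      have hsupge : t (i + 1) ≤ sSup (K Y) := by
        have hle1 : (t i + t (i + 1)) / 2 ≤ sSup (K Y) := le_csSup hba hmK
        have hmemE : sSup (K Y) ∈ E := by
          simp only [hEdef, Finset.mem_union]
          right
          exact Finset.mem_image.2 ⟨Y, (Set.Finite.mem_toFinset _).2 hYF, rfl⟩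
        by_contra hcon
        push_neg at hcon
        exact hgap i _ hmemE ⟨by linarith, hcon⟩
      intro r h1 h2
      exact hKconv Y hYF _ hinf _ hsup r (le_trans hinfle h1) (le_trans h2 hsupge)
  -- the subdivision points
  set a : ℕ → T := fun i => par x z (t i) with hadef
  have haseg : ∀ i, MBtw x (a i) z := fun i => (par_spec (htIcc i)).1
  have hadist : ∀ i, dist x (a i) = t i := fun i => (par_spec (htIcc i)).2
  have habtw : ∀ {i j : ℕ}, i ≤ j → MBtw x (a i) (a j) ∧ MBtw (a i) (a j) z := by
    intro i j hij
    have h := btw_order (haseg i) (haseg j) (by rw [hadist, hadist]; exact htmono hij)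
    exact ⟨h.2.1, h.2.2⟩
  have ha0 : a 0 = x := by
    show par x z (t 0) = x
    rw [ht0]
    exact par_zero
  have halast : ∀ {i : ℕ}, L.length ≤ i → a i = z := by
    intro i hi
    show par x z (t i) = z
    rw [htlast hi]
    exact par_last
  have hsegpiece : ∀ i : ℕ, ∃ Y ∈ F, seg (a i) (a (i + 1)) ⊆ Y := by
    intro i
    obtain ⟨Y, hYF, hYK⟩ := hpiece i
    refine ⟨Y, hYF, ?_⟩
    intro w hw
    have hw' : MBtw (a i) w (a (i + 1)) := hw
    have hxw : MBtw x w z := seg_sub_seg (haseg i) (haseg (i + 1)) hw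
    obtain ⟨hc1, hc2⟩ := mbtw_concat (habtw (Nat.le_succ i)).1 hw'
    have hc1' : dist x (a i) + dist (a i) w = dist x w := hc1
    have hc2' : dist x w + dist w (a (i + 1)) = dist x (a (i + 1)) := hc2
    rw [hadist] at hc1'
    rw [hadist] at hc2'
    have hlo : t i ≤ dist x w := by
      have := dist_nonneg (x := a i) (y := w)
      linarith
    have hhi : dist x w ≤ t (i + 1) := by
      have := dist_nonneg (x := w) (y := a (i + 1))
      linarith
    have hrK := hYK _ hlo hhi
    have hww : par x z (dist x w) = w := par_of_btw hxw
    rw [← hww]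
    exact (hKmem.1 hrK).2
  -- the main induction
  have key : ∀ i : ℕ, (∀ j ≤ i, MBtw (p x) (p (a j)) (p (a i))) ∧
      seg (p x) (p (a i)) ⊆ p '' seg x (a i) := by
    intro i
    induction i with
    | zero =>
      constructor
      · intro j hj
        have hj0 : j = 0 := Nat.le_zero.1 hj
        subst hj0
        rw [ha0]
        exact mbtw_self_left _ _
      · rw [ha0]
        intro w hw
        have hw' : w = p x := mbtw_eq hw
        exact ⟨x, mbtw_self_left x x, hw'.symm⟩
    | succ i ih =>
      obtain ⟨Y, hYF, hYseg⟩ := hsegpiece i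
      have hYYs : Y ∈ Ys := hFsub hYF
      have hstep : MBtw (p x) (p (a i)) (p (a (i + 1))) ∧
          seg (p (a i)) (p (a (i + 1))) ⊆ p '' seg (a i) (a (i + 1)) := by
        by_cases hY' : Y ∈ Ys'
        · have hcol : p (a i) = p (a (i + 1)) :=
            (hfib _ _).2 (Or.inr (fun w hw => ⟨Y, hY', hYseg hw⟩))
          constructor
          · rw [← hcol]
            exact mbtw_self_right _ _
          · rw [← hcol]
            intro w hw
            have hw' : w = p (a i) := mbtw_eq hw
            exact ⟨a i, mbtw_self_left _ _, hw'.symm⟩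
        · have hisoY := hiso Y ⟨hYYs, hY'⟩
          have haiY : a i ∈ Y := hYseg (mbtw_self_left _ _)
          have hai1Y : a (i + 1) ∈ Y := hYseg (mbtw_self_right _ _)
          have hdseg : dist (p (a i)) (p (a (i + 1))) = dist (a i) (a (i + 1)) :=
            hisoY _ haiY _ hai1Y
          have himg : seg (p (a i)) (p (a (i + 1))) = p '' seg (a i) (a (i + 1)) := by
            apply Set.Subset.antisymm
            · intro w hw
              have hw' : MBtw (p (a i)) w (p (a (i + 1))) := hw
              have hw'' : dist (p (a i)) w + dist w (p (a (i + 1))) =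
                  dist (p (a i)) (p (a (i + 1))) := hw'
              have hrIcc : dist (p (a i)) w ∈ Set.Icc (0:ℝ) (dist (a i) (a (i + 1))) := by
                refine ⟨dist_nonneg, ?_⟩
                have := dist_nonneg (x := w) (y := p (a (i + 1)))
                rw [← hdseg]
                linarith
              obtain ⟨hub, hud⟩ := par_spec hrIcc
              have huY : par (a i) (a (i + 1)) (dist (p (a i)) w) ∈ Y := hYseg hub
              have hub' : dist (a i) (par (a i) (a (i + 1)) (dist (p (a i)) w)) +
                  dist (par (a i) (a (i + 1)) (dist (p (a i)) w)) (a (i + 1)) =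
                  dist (a i) (a (i + 1)) := hub
              have hbd : MBtw (p (a i)) (p (par (a i) (a (i + 1)) (dist (p (a i)) w)))
                  (p (a (i + 1))) := by
                unfold MBtw
                rw [hisoY _ haiY _ huY, hisoY _ huY _ hai1Y, hdseg]
                exact hub'
              have hdu : dist (p (a i)) (p (par (a i) (a (i + 1)) (dist (p (a i)) w))) =
                  dist (p (a i)) w := by
                rw [hisoY _ haiY _ huY]
                exact hud
              exact ⟨_, hub, btw_unique hbd hw' hdu⟩
            · rintro w ⟨u, hu, rfl⟩
              have huY : u ∈ Y := hYseg hu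
              have hu' : dist (a i) u + dist u (a (i + 1)) = dist (a i) (a (i + 1)) := hu
              show MBtw (p (a i)) (p u) (p (a (i + 1)))
              unfold MBtw
              rw [hisoY _ haiY _ huY, hisoY _ huY _ hai1Y, hdseg]
              exact hu'
          refine ⟨?_, himg.le⟩
          obtain ⟨m, hmAC, hmAB, hmBC⟩ := exists_median (p x) (p (a i)) (p (a (i + 1)))
          by_cases hm : m = p (a i)
          · rw [← hm]
            exact hmAC
          · exfalso
            have hmimg : m ∈ p '' seg (a i) (a (i + 1)) := by
              rw [← himg]
              exact hmBC
            obtain ⟨u, hu, hpu⟩ := hmimg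
            obtain ⟨v, hv, hpv⟩ := ih.2 (hmAB : m ∈ seg (p x) (p (a i)))
            have hune : u ≠ a i := fun h => hm (by rw [← hpu, h])
            have hxai1 : MBtw x (a i) (a (i + 1)) := (habtw (Nat.le_succ i)).1
            have hxaiu : MBtw x (a i) u := (mbtw_concat hxai1 hu).1
            have hvau : MBtw v (a i) u := by
              have hv' : MBtw x v (a i) := hv
              have t1 := dist_triangle x v u
              have t2 := dist_triangle v (a i) u
              unfold MBtw at hv' hxaiu ⊢
              linarith
            rcases eq_or_ne u v with rfl | huv
            · exact hune (mbtw_eq hvau).symm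
            · have hcol : seg u v ⊆ ⋃₀ Ys' := by
                rcases (hfib u v).1 (by rw [hpu, hpv]) with h | h
                · exact absurd h huv
                · exact h
              have haiuv : a i ∈ seg u v := mbtw_symm hvau
              have huuv : u ∈ seg u v := mbtw_self_left u v
              have hsubuv : seg u (a i) ⊆ seg u v := seg_sub_seg huuv haiuv
              have hpuai : p u = p (a i) :=
                (hfib u (a i)).2 (Or.inr fun w hw => hcol (hsubuv hw))
              exact hm (by rw [← hpu, hpuai])
      constructor
      · intro j hj
        rcases eq_or_lt_of_le hj with rfl | hlt
        · exact mbtw_self_right _ _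
        · have h1 : dist (p x) (p (a j)) + dist (p (a j)) (p (a i)) =
              dist (p x) (p (a i)) := ih.1 j (Nat.lt_succ_iff.1 hlt)
          have h2 : dist (p x) (p (a i)) + dist (p (a i)) (p (a (i + 1))) =
              dist (p x) (p (a (i + 1))) := hstep.1
          have t1 := dist_triangle (p (a j)) (p (a i)) (p (a (i + 1)))
          have t2 := dist_triangle (p x) (p (a j)) (p (a (i + 1)))
          show dist (p x) (p (a j)) + dist (p (a j)) (p (a (i + 1))) =
            dist (p x) (p (a (i + 1)))
          linarith
      · intro w hw
        have hxai1 : MBtw x (a i) (a (i + 1)) := (habtw (Nat.le_succ i)).1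
        have hsub1 : seg x (a i) ⊆ seg x (a (i + 1)) :=
          seg_sub_seg (mbtw_self_left x (a (i + 1))) hxai1
        have hsub2 : seg (a i) (a (i + 1)) ⊆ seg x (a (i + 1)) :=
          seg_sub_seg hxai1 (mbtw_self_right x (a (i + 1)))
        rcases le_total (dist (p x) w) (dist (p x) (p (a i))) with hle | hle
        · obtain ⟨v, hv, hpv⟩ := ih.2 (btw_order hw hstep.1 hle).2.1
          exact ⟨v, hsub1 hv, hpv⟩
        · obtain ⟨v, hv, hpv⟩ := hstep.2 (btw_order hstep.1 hw hle).2.2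
          exact ⟨v, hsub2 hv, hpv⟩
  -- conclusion
  obtain ⟨kf, hgk⟩ := List.mem_iff_get.1 (hmemL.1 hyE)
  have hkt : t kf.1 = dist x y := by
    rw [show t kf.1 = L.get ⟨kf.1, kf.2⟩ from List.getD_eq_get L _ ⟨kf.1, kf.2⟩]
    exact hgk
  have hak : a kf.1 = y := by
    show par x z (t kf.1) = y
    rw [hkt]
    exact par_of_btw hy
  have haN : a (max kf.1 L.length) = z := halast (le_max_right _ _)
  have hfin := (key (max kf.1 L.length)).1 kf.1 (le_max_left _ _)
  rw [hak, haN] at hfin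
  exact hfin


/-- collapsing an invariant subfamily of a transverse covering (graph of
actions) to points yields an alignment-preserving map; hence minimality is preserved.
The collapse map p is characterized by: equivariance, surjectivity, being isometric on
non-collapsed pieces, and identifying x,y exactly when the segment [x,y] is contained in
the union of the collapsed subtrees. -/
theorem stmt_18 {G T T' : Type*} [Group G] [MetricSpace T] [MetricSpace T']
    [RealTree T] [RealTree T'] [MulAction G T] [MulAction G T']
    (isoT : ∀ g : G, Isometry fun x : T => g • x)
    (isoT' : ∀ g : G, Isometry fun x : T' => g • x)
    (Ys : Set (Set T)) (htc : TransverseCovering G Ys)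
    (Ys' : Set (Set T)) (hsub : Ys' ⊆ Ys)
    (hinv : ∀ g : G, ∀ Y ∈ Ys', g • Y ∈ Ys')
    (p : T → T') (hsurj : Function.Surjective p)
    (hequiv : ∀ (g : G) (x : T), p (g • x) = g • p x)
    (hiso : ∀ Y ∈ Ys \ Ys', ∀ x ∈ Y, ∀ y ∈ Y, dist (p x) (p y) = dist x y)
    (hfib : ∀ x y : T, p x = p y ↔ (x = y ∨ seg x y ⊆ ⋃₀ Ys')) :
    (∀ x y z : T, MBtw x y z → MBtw (p x) (p y) (p z)) ∧
      (MinimalAction G T → MinimalAction G T') := by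
  have halign : ∀ x y z : T, MBtw x y z → MBtw (p x) (p y) (p z) :=
    fun x y z hy => align_aux Ys htc Ys' hsub p hiso hfib x y z hy
  refine ⟨halign, ?_⟩
  intro hmin Y' hne hconv hinvY'
  have hpre : p ⁻¹' Y' = Set.univ := by
    apply hmin
    · obtain ⟨w, hw⟩ := hne
      obtain ⟨x0, rfl⟩ := hsurj w
      exact ⟨x0, hw⟩
    · intro u hu v hv w hw
      exact hconv (p u) hu (p v) hv (halign u w v hw)
    · intro g
      ext u
      constructor
      · rintro ⟨v, hv, rfl⟩
        show p (g • v) ∈ Y'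
        rw [hequiv, ← hinvY' g]
        exact Set.smul_mem_smul_set hv
      · intro hu
        refine ⟨g⁻¹ • u, ?_, smul_inv_smul g u⟩
        show p (g⁻¹ • u) ∈ Y'
        rw [hequiv, ← hinvY' g⁻¹]
        exact Set.smul_mem_smul_set hu
  apply Set.eq_univ_of_forall
  intro w
  obtain ⟨x0, rfl⟩ := hsurj w
  have hx0 : x0 ∈ p ⁻¹' Y' := by rw [hpre]; exact Set.mem_univ _
  exact hx0
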